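/- Let φ̂ ∈ ℝ and 0 ≤ ε ≤ π/2. Then for every φ with |φ − φ̂| ≤ ε, the matrix J_φ(φ) − (J_φ(φ̂) − sin(ε)·I₂) is positive semidefinite, where J_φ(θ) = (cosθ, sinθ)(cosθ, sinθ)ᵀ. -/

import Mathlib

open Real Matrix

lemma key_quad (sd cd e P Q : ℝ) (h1 : sd^2 + cd^2 = 1) (he : |sd| ≤ e) :
    (cd*P + sd*Q)^2 - P^2 ≤ e*(P^2+Q^2) := by
  have h2 : sd ≤ e := (abs_le.mp he).2
  have h3 : -e ≤ sd := (abs_le.mp he).1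
  have h0 : 0 ≤ e := le_trans (abs_nonneg sd) he
  have hS0 : (0:ℝ) ≤ P^2 + Q^2 := by positivity
  have hT2 : (sd*(Q^2-P^2) + 2*cd*P*Q)^2 ≤ (P^2 + Q^2)^2 := by
    nlinarith [sq_nonneg (cd*(Q^2-P^2) - 2*sd*P*Q)]
  have hTabs : |sd*(Q^2-P^2) + 2*cd*P*Q| ≤ P^2 + Q^2 := by
    exact abs_le_of_sq_le_sq hT2 hS0
  have expand : (cd*P + sd*Q)^2 - P^2 = sd * (sd*(Q^2-P^2) + 2*cd*P*Q) := by
    linear_combination P^2 * h1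
  calc (cd*P + sd*Q)^2 - P^2 = sd * (sd*(Q^2-P^2) + 2*cd*P*Q) := expand
    _ ≤ |sd * (sd*(Q^2-P^2) + 2*cd*P*Q)| := le_abs_self _
    _ = |sd| * |sd*(Q^2-P^2) + 2*cd*P*Q| := abs_mul _ _
    _ ≤ e * (P^2+Q^2) := mul_le_mul he hTabs (abs_nonneg _) h0

theorem stmt_8 (φh ε : ℝ) (hε0 : 0 ≤ ε) (hε : ε ≤ π / 2) (φ : ℝ)
    (hφ : |φ - φh| ≤ ε) :
    (Matrix.vecMulVec ![Real.cos φ, Real.sin φ] ![Real.cos φ, Real.sin φ]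
      - (Matrix.vecMulVec ![Real.cos φh, Real.sin φh] ![Real.cos φh, Real.sin φh]
          - Real.sin ε • (1 : Matrix (Fin 2) (Fin 2) ℝ))).PosSemidef := by
  rw [Matrix.posSemidef_iff_dotProduct_mulVec]
  constructor
  · ext i j
    fin_cases i <;> fin_cases j <;>
      simp [Matrix.vecMulVec, Matrix.one_apply, mul_comm]
  · intro x
    have hsd : |Real.sin (φh - φ)| ≤ Real.sin ε := by
      rw [abs_sub_comm] at hφ
      have h1 := abs_le.mp hφ
      rw [abs_le]
      constructor
      · rw [← Real.sin_neg]
        apply Real.sin_le_sin_of_le_of_le_pi_div_two <;> linarith [Real.pi_pos]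
      · apply Real.sin_le_sin_of_le_of_le_pi_div_two <;> linarith
    set c := Real.cos φ
    set s := Real.sin φ
    have hch : Real.cos φh = c * Real.cos (φh - φ) - s * Real.sin (φh - φ) := by
      rw [show φh = (φh - φ) + φ by ring, Real.cos_add]; simp only [c, s]; ring
    have hsh : Real.sin φh = s * Real.cos (φh - φ) + c * Real.sin (φh - φ) := by
      rw [show φh = (φh - φ) + φ by ring, Real.sin_add]; simp only [c, s]; ring
    set sd := Real.sin (φh - φ)
    set cd := Real.cos (φh - φ)
    have hpyth : sd^2 + cd^2 = 1 := Real.sin_sq_add_cos_sq _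
    simp only [dotProduct, Matrix.mulVec, Matrix.sub_apply, Matrix.smul_apply,
      Matrix.one_apply, Matrix.vecMulVec_apply, Fin.sum_univ_two, star_trivial]
    simp only [Matrix.cons_val_zero, Matrix.cons_val_one, Matrix.head_cons]
    norm_num
    rw [hch, hsh]
    have key := key_quad sd cd (Real.sin ε) (c * x 0 + s * x 1) (-s * x 0 + c * x 1)
      hpyth hsd
    have hcs : c^2 + s^2 = 1 := by
      have := Real.sin_sq_add_cos_sq φ; simp only [c, s]; linarith
    nlinarith [key, hcs]
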